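/- For any \lambda \in R^7 and \rho > 0, the limit as t \to \infty of (1/48) \int_0^\infty (\rho r / \sqrt{t})^{\sqrt{9 + 6|\lambda|^2/\log t} - 3} e^{-r^2/2} r^7 dr equals e^{-|\lambda|^2/2}. -/

import Mathlib

open MeasureTheory Filter Real


lemma sqrt_nine : Real.sqrt 9 = 3 := by
  rw [show (9:ℝ) = 3^2 by norm_num, Real.sqrt_sq (by norm_num : (0:ℝ) ≤ 3)]

lemma aux_u_tendsto (c : ℝ) : Tendsto (fun t : ℝ => 6 * c / Real.log t) atTop (nhds 0) :=
  Tendsto.div_atTop tendsto_const_nhds Real.tendsto_log_atTop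

lemma aux_alpha_tendsto (c : ℝ) :
    Tendsto (fun t : ℝ => Real.sqrt (9 + 6 * c / Real.log t) - 3) atTop (nhds 0) := by
  have h : ContinuousAt (fun u : ℝ => Real.sqrt (9 + u) - 3) 0 := by fun_prop
  have := h.tendsto.comp (aux_u_tendsto c)
  simpa [sqrt_nine, Function.comp_def] using this

lemma aux_alphaL (c : ℝ) (hc : 0 ≤ c) :
    Tendsto (fun t : ℝ => (Real.sqrt (9 + 6 * c / Real.log t) - 3) * Real.log t) atTop
      (nhds c) := by
  have h : ContinuousAt (fun u : ℝ => 6 * c / (Real.sqrt (9 + u) + 3)) 0 := by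
    apply ContinuousAt.div continuousAt_const (by fun_prop)
    simp [sqrt_nine]
  have hg : Tendsto (fun t : ℝ => 6 * c / (Real.sqrt (9 + 6 * c / Real.log t) + 3)) atTop
      (nhds c) := by
    have := h.tendsto.comp (aux_u_tendsto c)
    simp only [Function.comp_def] at this
    convert this using 2
    rw [add_zero, sqrt_nine]
    norm_num
  refine hg.congr' ?_
  filter_upwards [eventually_gt_atTop (1:ℝ)] with t ht
  have hL : 0 < Real.log t := Real.log_pos ht
  set u := 6 * c / Real.log t with hu
  have hu0 : 0 ≤ u := by positivity
  have h9 : (0:ℝ) ≤ 9 + u := by linarith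
  have hs : Real.sqrt (9 + u) * Real.sqrt (9 + u) = 9 + u := Real.mul_self_sqrt h9
  have hd : 0 < Real.sqrt (9 + u) + 3 := by positivity
  rw [div_eq_iff hd.ne']
  have huL : u * Real.log t = 6 * c := by
    rw [hu]; field_simp
  nlinarith [hs, huL]


lemma aux_bound_integrable :
    IntegrableOn (fun r : ℝ => (r ^ 6 + r ^ 8) * Real.exp (-r ^ 2 / 2)) (Set.Ioi 0) := by
  have h6 := integrableOn_rpow_mul_exp_neg_mul_sq (b := 1/2) (by norm_num) (s := 6) (by norm_num)
  have h8 := integrableOn_rpow_mul_exp_neg_mul_sq (b := 1/2) (by norm_num) (s := 8) (by norm_num)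
  have hsum : IntegrableOn
      (fun x : ℝ => x ^ (6:ℝ) * Real.exp (-(1/2) * x ^ 2) + x ^ (8:ℝ) * Real.exp (-(1/2) * x ^ 2))
      (Set.Ioi 0) := h6.add h8
  refine hsum.congr_fun (fun r hr => ?_) measurableSet_Ioi
  have hr0 : (0:ℝ) < r := hr
  dsimp only
  rw [show ((6:ℝ)) = ((6:ℕ):ℝ) by norm_num, Real.rpow_natCast,
    show ((8:ℝ)) = ((8:ℕ):ℝ) by norm_num, Real.rpow_natCast]
  ring_nf

lemma aux_int_tendsto (α : ℝ → ℝ) (hα : Tendsto α atTop (nhds 0)) :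
    Tendsto (fun t : ℝ => ∫ r in Set.Ioi (0:ℝ), r ^ α t * (Real.exp (-r ^ 2 / 2) * r ^ 7))
      atTop (nhds (∫ r in Set.Ioi (0:ℝ), Real.exp (-r ^ 2 / 2) * r ^ 7)) := by
  apply tendsto_integral_filter_of_dominated_convergence
    (fun r : ℝ => (r ^ 6 + r ^ 8) * Real.exp (-r ^ 2 / 2))
  · filter_upwards with t
    apply Measurable.aestronglyMeasurable
    fun_prop
  · have hev : ∀ᶠ t : ℝ in atTop, |α t| ≤ 1 := by
      have habs : ∀ᶠ x : ℝ in nhds (0:ℝ), |x| ≤ 1 := by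
        have h2 := eventually_abs_sub_lt (0:ℝ) (by norm_num : (0:ℝ) < 1)
        filter_upwards [h2] with x hx
        simpa using hx.le
      exact hα.eventually habs
    filter_upwards [hev] with t ht
    rw [ae_restrict_iff' measurableSet_Ioi]
    filter_upwards with r hr
    have hr0 : (0:ℝ) < r := hr
    have key : r ^ α t * r ^ 7 ≤ r ^ 6 + r ^ 8 := by
      have h1 : r ^ α t * r ^ 7 = r ^ (α t + 7) := by
        rw [show (r:ℝ) ^ (7:ℕ) = r ^ ((7:ℕ):ℝ) from (Real.rpow_natCast r 7).symm,
          ← Real.rpow_add hr0]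
        norm_num
      rcases le_total r 1 with h | h
      · have : r ^ (α t + 7) ≤ r ^ (6:ℝ) := by
          apply Real.rpow_le_rpow_of_exponent_ge hr0 h
          have := abs_le.mp ht; linarith
        rw [h1]
        calc r ^ (α t + 7) ≤ r ^ (6:ℝ) := this
          _ = r ^ 6 := by rw [show ((6:ℝ)) = ((6:ℕ):ℝ) by norm_num, Real.rpow_natCast]
          _ ≤ r ^ 6 + r ^ 8 := le_add_of_nonneg_right (by positivity)
      · have : r ^ (α t + 7) ≤ r ^ (8:ℝ) := by
          apply Real.rpow_le_rpow_of_exponent_le h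
          have := abs_le.mp ht; linarith
        rw [h1]
        calc r ^ (α t + 7) ≤ r ^ (8:ℝ) := this
          _ = r ^ 8 := by rw [show ((8:ℝ)) = ((8:ℕ):ℝ) by norm_num, Real.rpow_natCast]
          _ ≤ r ^ 6 + r ^ 8 := le_add_of_nonneg_left (by positivity)
    have hnn : (0:ℝ) ≤ r ^ α t * (Real.exp (-r ^ 2 / 2) * r ^ 7) := by positivity
    rw [Real.norm_eq_abs, abs_of_nonneg hnn]
    calc r ^ α t * (Real.exp (-r ^ 2 / 2) * r ^ 7)
        = (r ^ α t * r ^ 7) * Real.exp (-r ^ 2 / 2) := by ring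
      _ ≤ (r ^ 6 + r ^ 8) * Real.exp (-r ^ 2 / 2) := by
          apply mul_le_mul_of_nonneg_right key (Real.exp_nonneg _)
  · exact aux_bound_integrable
  · rw [ae_restrict_iff' measurableSet_Ioi]
    filter_upwards with r hr
    have hr0 : (0:ℝ) < r := hr
    have h1 : Tendsto (fun t : ℝ => r ^ α t) atTop (nhds 1) := by
      have := (tendsto_const_nhds (x := r) (f := atTop (α := ℝ))).rpow hα (Or.inl hr0.ne')
      simpa using this
    have := h1.mul_const (Real.exp (-r ^ 2 / 2) * r ^ 7)
    simpa using this

lemma aux_int_value :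
    ∫ r in Set.Ioi (0:ℝ), Real.exp (-r ^ 2 / 2) * r ^ 7 = 48 := by
  have h := integral_rpow_mul_exp_neg_mul_rpow (p := 2) (q := 7) (b := 1/2)
    (by norm_num) (by norm_num) (by norm_num)
  have heq : ∫ x in Set.Ioi (0:ℝ), x ^ (7:ℝ) * Real.exp (-(1/2) * x ^ (2:ℝ))
      = ∫ r in Set.Ioi (0:ℝ), Real.exp (-r ^ 2 / 2) * r ^ 7 := by
    refine setIntegral_congr_fun measurableSet_Ioi (fun r hr => ?_)
    have hr0 : (0:ℝ) < r := hr
    rw [show ((7:ℝ)) = ((7:ℕ):ℝ) by norm_num, Real.rpow_natCast,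
      show ((2:ℝ)) = ((2:ℕ):ℝ) by norm_num, Real.rpow_natCast]
    ring_nf
  rw [← heq, h]
  have hG : Real.Gamma ((7 + 1) / 2) = 6 := by
    rw [show ((7:ℝ)+1)/2 = ((3:ℕ):ℝ)+1 by norm_num, Real.Gamma_nat_eq_factorial]
    norm_num [Nat.factorial]
  rw [hG]
  rw [show (-((7:ℝ)+1)/2) = ((-4 : ℤ):ℝ) by norm_num, Real.rpow_intCast]
  norm_num

/-- The limit computation in the asymptotic winding on `𝕆¹`:
`lim_{t→∞} (1/48) ∫₀^∞ (ρ r/√t)^{√(9 + 6|λ|²/log t) - 3} e^{-r²/2} r⁷ dr = e^{-|λ|²/2}`. -/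
theorem octonion_flat_winding_limit (lam : EuclideanSpace ℝ (Fin 7)) (ρ : ℝ) (hρ : 0 < ρ) :
    Tendsto
      (fun t : ℝ => (1 / 48) *
        ∫ r in Set.Ioi (0:ℝ),
          (ρ * r / Real.sqrt t) ^ (Real.sqrt (9 + 6 * ‖lam‖ ^ 2 / Real.log t) - 3) *
            Real.exp (-r ^ 2 / 2) * r ^ 7)
      atTop (nhds (Real.exp (-‖lam‖ ^ 2 / 2))) := by
  set c : ℝ := ‖lam‖ ^ 2 with hc
  set α : ℝ → ℝ := fun t => Real.sqrt (9 + 6 * c / Real.log t) - 3 with hα_def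
  have hα : Tendsto α atTop (nhds 0) := aux_alpha_tendsto c
  -- the inner integral
  set I : ℝ → ℝ := fun t => ∫ r in Set.Ioi (0:ℝ), r ^ α t * (Real.exp (-r ^ 2 / 2) * r ^ 7)
    with hI_def
  have hI : Tendsto I atTop (nhds 48) := by
    have := aux_int_tendsto α hα
    rwa [aux_int_value] at this
  -- the prefactor
  have hC : Tendsto (fun t : ℝ => (ρ / Real.sqrt t) ^ α t) atTop (nhds (Real.exp (-c / 2))) := by
    have hinner : Tendsto (fun t : ℝ => Real.log ρ * α t - α t * Real.log t / 2) atTop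
        (nhds (-c / 2)) := by
      have h1 := (hα.const_mul (Real.log ρ)).sub ((aux_alphaL c (by rw [hc]; positivity)).div_const 2)
      rw [neg_div]; simpa using h1
    have hexp := (Real.continuous_exp.tendsto _).comp hinner
    refine hexp.congr' ?_
    filter_upwards [eventually_gt_atTop (1:ℝ)] with t ht
    have ht0 : (0:ℝ) < t := by linarith
    have hst : 0 < Real.sqrt t := Real.sqrt_pos.mpr ht0
    have hb : 0 < ρ / Real.sqrt t := div_pos hρ hst
    rw [Function.comp_apply, Real.rpow_def_of_pos hb,
      Real.log_div hρ.ne' hst.ne', Real.log_sqrt ht0.le]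
    ring_nf
  -- combine
  have hmain := (hC.mul hI).const_mul (1/48 : ℝ)
  have hval : (1/48 : ℝ) * (Real.exp (-c / 2) * 48) = Real.exp (-c / 2) := by ring
  rw [hval] at hmain
  refine hmain.congr' ?_
  filter_upwards [eventually_gt_atTop (1:ℝ)] with t ht
  have ht0 : (0:ℝ) < t := by linarith
  have hst : 0 < Real.sqrt t := Real.sqrt_pos.mpr ht0
  have hb : (0:ℝ) ≤ ρ / Real.sqrt t := (div_pos hρ hst).le
  congr 1
  rw [hI_def, ← integral_const_mul]
  refine setIntegral_congr_fun measurableSet_Ioi (fun r hr => ?_)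
  have hr0 : (0:ℝ) < r := hr
  rw [show ρ * r / Real.sqrt t = (ρ / Real.sqrt t) * r by ring,
    Real.mul_rpow hb hr0.le]
  ring
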